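/- Let d ≥ 2, let f : ℝ^d → ℝ be continuously differentiable with L-Lipschitz-continuous gradient, let E be a (d−1)-dimensional hyperrectangle in ℝ^d, let δ > 0, and let S be a nice δ-net of E. Let ε > 0 and let x ∈ ℝ^d with ℓ := dist(x, E) = min_{y∈E} ‖x−y‖₂ > 0. If every z ∈ S is ε-unreachable from x, then every y ∈ E is ε′-unreachable from x, where ε′ = ε + (δ²/(2ℓ))·(L + 2ε/ℓ). -/

import Mathlib

open scoped RealInnerProductSpace

section Aux

variable {H : Type*} [NormedAddCommGroup H] [InnerProductSpace ℝ H]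

/-- Algebraic bound: `‖u - v‖ ≤ ‖u‖ - ⟪u,v⟫/‖u‖ + ‖v‖²/(2‖u‖)`. -/
lemma aux_norm_sub_le (u v : H) (hu : u ≠ 0) :
    ‖u - v‖ ≤ ‖u‖ - ⟪u, v⟫ / ‖u‖ + ‖v‖ ^ 2 / (2 * ‖u‖) := by
  have hr : (0:ℝ) < ‖u‖ := norm_pos_iff.mpr hu
  have hsq : ‖u - v‖ ^ 2 = ‖u‖ ^ 2 - 2 * ⟪u, v⟫ + ‖v‖ ^ 2 := norm_sub_sq_real u v
  have hcs := abs_le.mp (abs_real_inner_le_norm u v)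
  have hA : (0:ℝ) ≤ ‖u - v‖ := norm_nonneg _
  set B : ℝ := ‖u‖ - ⟪u, v⟫ / ‖u‖ + ‖v‖ ^ 2 / (2 * ‖u‖) with hB
  clear_value B
  have hBalt : B = (2 * ‖u‖ ^ 2 - 2 * ⟪u, v⟫ + ‖v‖ ^ 2) / (2 * ‖u‖) := by
    rw [hB]; field_simp
  have hB0 : 0 ≤ B := by
    rw [hBalt]
    apply div_nonneg _ (by positivity)
    nlinarith [sq_nonneg (‖u‖ - ‖v‖), hcs.1]
  have hdiff : B ^ 2 - ‖u - v‖ ^ 2 = (⟪u, v⟫ / ‖u‖ - ‖v‖ ^ 2 / (2 * ‖u‖)) ^ 2 := by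
    rw [hsq, hB]; field_simp; ring
  have hA2 : ‖u - v‖ ^ 2 ≤ B ^ 2 := by
    have hs := sq_nonneg (⟪u, v⟫ / ‖u‖ - ‖v‖ ^ 2 / (2 * ‖u‖))
    linarith [hdiff, hs]
  calc ‖u - v‖ = Real.sqrt (‖u - v‖ ^ 2) := (Real.sqrt_sq hA).symm
    _ ≤ Real.sqrt (B ^ 2) := Real.sqrt_le_sqrt hA2
    _ = B := Real.sqrt_sq hB0

/-- Derivative at `0` of `t ↦ ‖u - t • w‖`. -/
lemma aux_hasDerivAt_norm (u w : H) (hu : u ≠ 0) :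
    HasDerivAt (fun t : ℝ => ‖u - t • w‖) (-(⟪u, w⟫ / ‖u‖)) 0 := by
  have hr : (0:ℝ) < ‖u‖ := norm_pos_iff.mpr hu
  have hfun : (fun t : ℝ => ‖u - t • w‖)
      = fun t => Real.sqrt (‖u‖ ^ 2 - 2 * ⟪u, w⟫ * t + ‖w‖ ^ 2 * t ^ 2) := by
    funext t
    have h1 : ‖u - t • w‖ ^ 2 = ‖u‖ ^ 2 - 2 * ⟪u, w⟫ * t + ‖w‖ ^ 2 * t ^ 2 := by
      rw [norm_sub_sq_real, real_inner_smul_right]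
      have : ‖t • w‖ ^ 2 = t ^ 2 * ‖w‖ ^ 2 := by
        rw [norm_smul, mul_pow, Real.norm_eq_abs, sq_abs]
      rw [this]; ring
    rw [← Real.sqrt_sq (norm_nonneg (u - t • w)), h1]
  rw [hfun]
  have hq : HasDerivAt (fun t : ℝ => ‖u‖ ^ 2 - 2 * ⟪u, w⟫ * t + ‖w‖ ^ 2 * t ^ 2)
      (-(2 * ⟪u, w⟫)) 0 := by
    have h1 : HasDerivAt (fun t : ℝ => ‖u‖ ^ 2 - 2 * ⟪u, w⟫ * t) (-(2 * ⟪u, w⟫)) 0 := by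
      simpa using ((hasDerivAt_id (0:ℝ)).const_mul (2 * ⟪u, w⟫)).const_sub (‖u‖ ^ 2)
    have h2 : HasDerivAt (fun t : ℝ => ‖w‖ ^ 2 * t ^ 2) 0 0 := by
      simpa using (hasDerivAt_pow 2 (0:ℝ)).const_mul (‖w‖ ^ 2)
    have h3 := h1.add h2
    rw [add_zero] at h3
    exact h3
  have h0 : ‖u‖ ^ 2 - 2 * ⟪u, w⟫ * 0 + ‖w‖ ^ 2 * 0 ^ 2 ≠ 0 := by
    simp only [mul_zero, ne_eq, zero_pow, sub_zero, add_zero]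
    positivity
  have := (Real.hasDerivAt_sqrt h0).comp 0 hq
  have heval : ‖u‖ ^ 2 - 2 * ⟪u, w⟫ * 0 + ‖w‖ ^ 2 * 0 ^ 2 = ‖u‖ ^ 2 := by ring
  rw [heval] at this
  have hsqrt : Real.sqrt (‖u‖ ^ 2) = ‖u‖ := Real.sqrt_sq (norm_nonneg u)
  refine this.congr_deriv ?_
  rw [hsqrt, div_mul_eq_mul_div, one_mul, neg_div, mul_div_mul_left _ _ (two_ne_zero' ℝ)]

/-- Derivative of `f` along a line, expressed with the gradient. -/
lemma aux_hasDerivAt_line [CompleteSpace H] (f : H → ℝ) (hfd : Differentiable ℝ f)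
    (p v : H) (t : ℝ) :
    HasDerivAt (fun s : ℝ => f (p + s • v)) ⟪gradient f (p + t • v), v⟫ t := by
  have h1 : HasDerivAt (fun s : ℝ => p + s • v) v t := by
    simpa using ((hasDerivAt_id t).smul_const v).const_add p
  have h2 := ((hfd (p + t • v)).hasGradientAt.hasFDerivAt).comp_hasDerivAt t h1
  simpa [InnerProductSpace.toDual_apply_apply, Function.comp_def] using h2

/-- Descent lemma: quadratic upper bound for functions with Lipschitz gradient. -/
lemma aux_descent [CompleteSpace H] (f : H → ℝ) (L : ℝ) (hf : ContDiff ℝ 1 f)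
    (hgrad : ∀ x y : H, ‖gradient f x - gradient f y‖ ≤ L * ‖x - y‖)
    (p v : H) :
    f (p + v) ≤ f p + ⟪gradient f p, v⟫ + L / 2 * ‖v‖ ^ 2 := by
  have hfd : Differentiable ℝ f := hf.differentiable one_ne_zero
  set g : ℝ → ℝ := fun t => f (p + t • v) - ⟪gradient f p, v⟫ * t - L / 2 * ‖v‖ ^ 2 * t ^ 2
    with hg
  have hgd : ∀ t : ℝ, HasDerivAt g
      (⟪gradient f (p + t • v), v⟫ - ⟪gradient f p, v⟫ - L / 2 * ‖v‖ ^ 2 * (2 * t)) t := by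
    intro t
    have h := ((aux_hasDerivAt_line f hfd p v t).sub
      ((hasDerivAt_id t).const_mul ⟪gradient f p, v⟫)).sub
      ((hasDerivAt_pow 2 t).const_mul (L / 2 * ‖v‖ ^ 2))
    refine h.congr_deriv ?_
    norm_num
  have hanti : AntitoneOn g (Set.Icc 0 1) := by
    apply antitoneOn_of_deriv_nonpos (convex_Icc 0 1)
    · intro t _; exact (hgd t).continuousAt.continuousWithinAt
    · intro t _; exact (hgd t).differentiableAt.differentiableWithinAt
    · intro t ht
      rw [interior_Icc] at ht
      rw [(hgd t).deriv]
      have hb : ⟪gradient f (p + t • v) - gradient f p, v⟫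
          ≤ ‖gradient f (p + t • v) - gradient f p‖ * ‖v‖ := real_inner_le_norm _ _
      rw [inner_sub_left] at hb
      have hgl := hgrad (p + t • v) p
      have hnn : ‖p + t • v - p‖ = t * ‖v‖ := by
        simp [norm_smul, abs_of_pos ht.1]
      rw [hnn] at hgl
      nlinarith [norm_nonneg v, ht.1.le,
        mul_le_mul_of_nonneg_right hgl (norm_nonneg v)]
  have h01 := hanti (Set.left_mem_Icc.mpr zero_le_one) (Set.right_mem_Icc.mpr zero_le_one)
    zero_le_one
  simp only [hg, zero_smul, add_zero, mul_zero, zero_pow, sub_zero, mul_one, one_smul,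
    one_pow] at h01
  linarith

end Aux

/-- A face of the hyperrectangle `R = ∏ i [a i, b i]` is obtained by fixing
some coordinates to their endpoint values `a i` or `b i` and leaving the others
free. -/
def IsFace {d : ℕ} (a b : Fin d → ℝ) (F : Set (EuclideanSpace ℝ (Fin d))) : Prop :=
  ∃ σ : Fin d → Option Bool,
    F = {y | ∀ i, (σ i).elim (a i ≤ y i ∧ y i ≤ b i)
      (fun s => y i = if s then b i else a i)}

/-- `S` is a nice `δ`-net of the hyperrectangle `R = ∏ i [a i, b i]`. -/
def IsNiceNet {d : ℕ} (δ : ℝ) (a b : Fin d → ℝ)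
    (S : Finset (EuclideanSpace ℝ (Fin d))) : Prop :=
  (∀ z ∈ S, ∀ i, a i ≤ z i ∧ z i ≤ b i) ∧
  ∀ F : Set (EuclideanSpace ℝ (Fin d)), IsFace a b F →
    ∀ y ∈ F, ∃ z ∈ S, z ∈ F ∧ ‖z - y‖ ≤ δ

set_option maxHeartbeats 1000000 in
/-- If every point of a nice `δ`-net `S` of a
`(d−1)`-dimensional hyperrectangle `E` is `ε`-unreachable from `x` (where
`ℓ = dist(x, E) > 0`), then every point of `E` is `ε′`-unreachable from `x`
with `ε′ = ε + (δ²/(2ℓ))(L + 2ε/ℓ)`. -/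
theorem net_unreachable_implies_face_unreachable
    (d : ℕ) (hd : 2 ≤ d) (L : ℝ)
    (f : EuclideanSpace ℝ (Fin d) → ℝ)
    (hf : ContDiff ℝ 1 f)
    (hgrad : ∀ x y : EuclideanSpace ℝ (Fin d),
      ‖gradient f x - gradient f y‖ ≤ L * ‖x - y‖)
    (a b : Fin d → ℝ) (hab : ∀ i, a i ≤ b i)
    (hdim : Set.ncard {i | a i < b i} = d - 1)
    (E : Set (EuclideanSpace ℝ (Fin d)))
    (hE : E = {y | ∀ i, a i ≤ y i ∧ y i ≤ b i})
    (δ : ℝ) (hδ : 0 < δ)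
    (S : Finset (EuclideanSpace ℝ (Fin d))) (hS : IsNiceNet δ a b S)
    (ε : ℝ) (hε : 0 < ε)
    (x : EuclideanSpace ℝ (Fin d)) (ℓ : ℝ)
    (hℓ : ℓ = Metric.infDist x E) (hℓpos : 0 < ℓ)
    (hunreach : ∀ z ∈ S, f z > f x - ε * ‖x - z‖) :
    ∀ y ∈ E, f y > f x - (ε + δ ^ 2 / (2 * ℓ) * (L + 2 * ε / ℓ)) * ‖x - y‖ := by
  classical
  have hd0 : 0 < d := by omega
  haveI : Nonempty (Fin d) := ⟨⟨0, hd0⟩⟩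
  have hfd : Differentiable ℝ f := hf.differentiable one_ne_zero
  have hL : 0 ≤ L := by
    have h := hgrad (EuclideanSpace.single (⟨0, hd0⟩ : Fin d) (1 : ℝ)) 0
    rw [sub_zero, EuclideanSpace.norm_single, norm_one, mul_one] at h
    exact le_trans (norm_nonneg _) h
  have hEmem : ∀ w : EuclideanSpace ℝ (Fin d), w ∈ E ↔ ∀ i, a i ≤ w i ∧ w i ≤ b i := by
    intro w; rw [hE]; exact Iff.rfl
  have hEc : IsCompact E := by
    have he : E = (PiLp.continuousLinearEquiv 2 ℝ (fun _ : Fin d => ℝ)) ⁻¹'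
        (Set.univ.pi fun i => Set.Icc (a i) (b i)) := by
      ext w
      rw [Set.mem_preimage, hEmem w, Set.mem_univ_pi]
      simp only [PiLp.continuousLinearEquiv_apply, Set.mem_Icc]
    rw [he]
    exact ((PiLp.continuousLinearEquiv 2 ℝ (fun _ : Fin d => ℝ)).toHomeomorph.isCompact_preimage).mpr
      (isCompact_univ_pi fun i => isCompact_Icc)
  have hEne : E.Nonempty :=
    ⟨(show EuclideanSpace ℝ (Fin d) from WithLp.toLp 2 a), (hEmem _).mpr fun i => ⟨le_rfl, hab i⟩⟩
  have hψc : ContinuousOn (fun w : EuclideanSpace ℝ (Fin d) => f w + ε * ‖x - w‖) E :=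
    (hf.continuous.add (continuous_const.mul ((continuous_const.sub continuous_id).norm))).continuousOn
  obtain ⟨p, hpE, hpmin⟩ := hEc.exists_isMinOn hEne hψc
  have hpmin' : ∀ w ∈ E, f p + ε * ‖x - p‖ ≤ f w + ε * ‖x - w‖ := fun w hw => hpmin hw
  have hpmem : ∀ i, a i ≤ p i ∧ p i ≤ b i := (hEmem p).mp hpE
  -- the minimal face containing `p`, and a nearby net point in it
  set σ : Fin d → Option Bool := fun i =>
    if p i = b i then some true else if p i = a i then some false else none with hσ
  clear_value σ
  set F : Set (EuclideanSpace ℝ (Fin d)) :=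
    {w | ∀ i, (σ i).elim (a i ≤ w i ∧ w i ≤ b i) (fun s => w i = if s then b i else a i)}
    with hF
  clear_value F
  have hpF : p ∈ F := by
    rw [hF, Set.mem_setOf_eq]
    intro i
    rw [hσ]
    dsimp only
    split_ifs with h1 h2
    · simpa using h1
    · simpa using h2
    · exact hpmem i
  obtain ⟨z, hzS, hzF, hzd⟩ := hS.2 F ⟨σ, hF⟩ p hpF
  have hzmem : ∀ i, a i ≤ z i ∧ z i ≤ b i := hS.1 z hzS
  have hzE : z ∈ E := (hEmem z).mpr hzmem
  have key : ∀ i, z i = p i ∨ (a i < p i ∧ p i < b i) := by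
    intro i
    have hz' : ∀ j, (σ j).elim (a j ≤ z j ∧ z j ≤ b j)
        (fun s => z j = if s then b j else a j) := by
      rw [hF, Set.mem_setOf_eq] at hzF; exact hzF
    have hz := hz' i
    rw [hσ] at hz
    dsimp only at hz
    by_cases h1 : p i = b i
    · left
      rw [if_pos h1] at hz
      simp only [Option.elim] at hz
      rw [hz, h1]
      simp
    · by_cases h2 : p i = a i
      · left
        rw [if_neg h1, if_pos h2] at hz
        simp only [Option.elim] at hz
        rw [hz, h2]
        simp
      · right
        exact ⟨lt_of_le_of_ne (hpmem i).1 (Ne.symm h2), lt_of_le_of_ne (hpmem i).2 h1⟩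
  set v : EuclideanSpace ℝ (Fin d) := z - p with hv
  clear_value v
  have hvδ : ‖v‖ ≤ δ := hzd
  set u : EuclideanSpace ℝ (Fin d) := x - p with hu2
  clear_value u
  have hru : ℓ ≤ ‖u‖ := by
    rw [hℓ, hu2, ← dist_eq_norm]
    exact Metric.infDist_le_dist_of_mem hpE
  have hupos : 0 < ‖u‖ := lt_of_lt_of_le hℓpos hru
  have hune : u ≠ 0 := norm_pos_iff.mp hupos
  have hxw : ∀ t : ℝ, x - (p + t • v) = u - t • v := by intro t; rw [hu2]; abel
  have hgder : HasDerivAt (fun t : ℝ => f (p + t • v) + ε * ‖x - (p + t • v)‖)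
      (⟪gradient f p, v⟫ + ε * -(⟪u, v⟫ / ‖u‖)) 0 := by
    have h1 : HasDerivAt (fun t : ℝ => f (p + t • v)) ⟪gradient f p, v⟫ 0 := by
      have := aux_hasDerivAt_line f hfd p v 0
      simpa using this
    have h2 : HasDerivAt (fun t : ℝ => ε * ‖x - (p + t • v)‖) (ε * -(⟪u, v⟫ / ‖u‖)) 0 := by
      have h3 := (aux_hasDerivAt_norm u v hune).const_mul ε
      have h4 : (fun t : ℝ => ε * ‖u - t • v‖) = fun t : ℝ => ε * ‖x - (p + t • v)‖ := by
        funext t; rw [hxw t]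
      rwa [h4] at h3
    exact h1.add h2
  set η : ℝ := Finset.univ.inf' Finset.univ_nonempty (fun i =>
      if z i = p i then (1 : ℝ) else min (p i - a i) (b i - p i) / (|z i - p i| + 1)) with hη
  clear_value η
  have hηpos : 0 < η := by
    rw [hη, Finset.lt_inf'_iff]
    intro i _
    split_ifs with h
    · norm_num
    · have h2 := (key i).resolve_left h
      have h3 : (0 : ℝ) < |z i - p i| + 1 := by positivity
      exact div_pos (lt_min (by linarith [h2.1]) (by linarith [h2.2])) h3
  have hmemE : ∀ t : ℝ, |t| ≤ η → p + t • v ∈ E := by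
    intro t ht
    rw [hEmem]
    intro i
    have hco : (p + t • v) i = p i + t * (z i - p i) := by
      simp [hv, PiLp.add_apply, PiLp.smul_apply, PiLp.sub_apply, smul_eq_mul]
    by_cases hzy : z i = p i
    · rw [hco, hzy]
      simpa using hpmem i
    · have h2 := (key i).resolve_left hzy
      have hle : η ≤ min (p i - a i) (b i - p i) / (|z i - p i| + 1) := by
        rw [hη]
        have h5 := Finset.inf'_le (fun i =>
          if z i = p i then (1 : ℝ) else min (p i - a i) (b i - p i) / (|z i - p i| + 1))
          (Finset.mem_univ i)
        rwa [if_neg hzy] at h5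
      have hci : (0 : ℝ) < |z i - p i| + 1 := by positivity
      have habs : |t * (z i - p i)| ≤ min (p i - a i) (b i - p i) := by
        rw [abs_mul]
        have h3 : |t| ≤ min (p i - a i) (b i - p i) / (|z i - p i| + 1) := le_trans ht hle
        have h4 := mul_le_mul_of_nonneg_right h3 (abs_nonneg (z i - p i))
        have hm : 0 ≤ min (p i - a i) (b i - p i) :=
          le_min (by linarith [h2.1]) (by linarith [h2.2])
        have h5 : (min (p i - a i) (b i - p i) / (|z i - p i| + 1)) * |z i - p i|
            ≤ min (p i - a i) (b i - p i) := by
          rw [div_mul_eq_mul_div, div_le_iff₀ hci]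
          nlinarith [abs_nonneg (z i - p i)]
        linarith
      have h6 := abs_le.mp habs
      have h7 : min (p i - a i) (b i - p i) ≤ p i - a i := min_le_left _ _
      have h8 : min (p i - a i) (b i - p i) ≤ b i - p i := min_le_right _ _
      rw [hco]
      constructor <;> linarith [h6.1, h6.2]
  have hlocmin : IsLocalMin (fun t : ℝ => f (p + t • v) + ε * ‖x - (p + t • v)‖) 0 := by
    have hIcc : Set.Icc (-η) η ∈ nhds (0 : ℝ) := Icc_mem_nhds (by linarith) hηpos
    have hev : ∀ᶠ t in nhds (0 : ℝ),
        (fun t : ℝ => f (p + t • v) + ε * ‖x - (p + t • v)‖) 0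
          ≤ (fun t : ℝ => f (p + t • v) + ε * ‖x - (p + t • v)‖) t := by
      apply Filter.eventually_of_mem hIcc
      intro t ht
      have hEt := hmemE t (abs_le.mpr ⟨ht.1, ht.2⟩)
      have h9 := hpmin' _ hEt
      simpa [← hu2] using h9
    exact hev
  have hD0 : ⟪gradient f p, v⟫ + ε * -(⟪u, v⟫ / ‖u‖) = 0 := hlocmin.hasDerivAt_eq_zero hgder
  have hzeq : p + v = z := by rw [hv]; abel
  have hdesc : f z ≤ f p + ⟪gradient f p, v⟫ + L / 2 * ‖v‖ ^ 2 := by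
    have h10 := aux_descent f L hf hgrad p v
    rwa [hzeq] at h10
  have hnorm : ‖x - z‖ ≤ ‖u‖ - ⟪u, v⟫ / ‖u‖ + ‖v‖ ^ 2 / (2 * ‖u‖) := by
    have h9 : x - z = u - v := by rw [hu2, hv]; abel
    rw [h9]
    exact aux_norm_sub_le u v hune
  have hzun := hunreach z hzS
  have hV2 : ‖v‖ ^ 2 ≤ δ ^ 2 := by nlinarith [norm_nonneg v]
  have hG : ⟪gradient f p, v⟫ = ε * (⟪u, v⟫ / ‖u‖) := by
    have hre : ε * -(⟪u, v⟫ / ‖u‖) = -(ε * (⟪u, v⟫ / ‖u‖)) := by ring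
    rw [hre] at hD0
    linarith
  have hmain : f x < f p + ε * ‖u‖ + L / 2 * δ ^ 2 + ε * (δ ^ 2 / (2 * ℓ)) := by
    have hεn : ε * ‖x - z‖ ≤ ε * (‖u‖ - ⟪u, v⟫ / ‖u‖ + ‖v‖ ^ 2 / (2 * ‖u‖)) :=
      mul_le_mul_of_nonneg_left hnorm hε.le
    have hdiv1 : ε * (‖v‖ ^ 2 / (2 * ‖u‖)) ≤ ε * (δ ^ 2 / (2 * ℓ)) := by
      apply mul_le_mul_of_nonneg_left _ hε.le
      exact div_le_div₀ (by positivity) hV2 (by linarith) (by linarith)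
    calc f x < f z + ε * ‖x - z‖ := by linarith
      _ ≤ f p + ⟪gradient f p, v⟫ + L / 2 * ‖v‖ ^ 2
          + ε * (‖u‖ - ⟪u, v⟫ / ‖u‖ + ‖v‖ ^ 2 / (2 * ‖u‖)) := by linarith
      _ = f p + ε * ‖u‖ + L / 2 * ‖v‖ ^ 2 + ε * (‖v‖ ^ 2 / (2 * ‖u‖)) := by
          rw [hG]; ring
      _ ≤ f p + ε * ‖u‖ + L / 2 * δ ^ 2 + ε * (δ ^ 2 / (2 * ℓ)) := by
          have h11 : L / 2 * ‖v‖ ^ 2 ≤ L / 2 * δ ^ 2 := by nlinarith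
          linarith
  intro y hyE
  have hRy : ℓ ≤ ‖x - y‖ := by
    rw [hℓ, ← dist_eq_norm]
    exact Metric.infDist_le_dist_of_mem hyE
  have hψy := hpmin' y hyE
  have hcoef : 0 ≤ δ ^ 2 / (2 * ℓ) * (L + 2 * ε / ℓ) := by
    apply mul_nonneg (by positivity)
    have h12 : (0 : ℝ) ≤ 2 * ε / ℓ := by positivity
    linarith
  have hkey : L / 2 * δ ^ 2 + ε * (δ ^ 2 / (2 * ℓ))
      ≤ δ ^ 2 / (2 * ℓ) * (L + 2 * ε / ℓ) * ‖x - y‖ := by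
    have h1 : δ ^ 2 / (2 * ℓ) * (L + 2 * ε / ℓ) * ℓ
        ≤ δ ^ 2 / (2 * ℓ) * (L + 2 * ε / ℓ) * ‖x - y‖ :=
      mul_le_mul_of_nonneg_left hRy hcoef
    have h2 : δ ^ 2 / (2 * ℓ) * (L + 2 * ε / ℓ) * ℓ = L / 2 * δ ^ 2 + ε * (δ ^ 2 / ℓ) := by
      field_simp
    have h3 : ε * (δ ^ 2 / (2 * ℓ)) ≤ ε * (δ ^ 2 / ℓ) := by
      apply mul_le_mul_of_nonneg_left _ hε.le
      exact div_le_div₀ (by positivity) le_rfl (by positivity) (by linarith)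
    linarith
  have hexp : (ε + δ ^ 2 / (2 * ℓ) * (L + 2 * ε / ℓ)) * ‖x - y‖
      = ε * ‖x - y‖ + δ ^ 2 / (2 * ℓ) * (L + 2 * ε / ℓ) * ‖x - y‖ := by ring
  rw [gt_iff_lt, hexp]
  linarith
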